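/- arXiv:1811.11407 — 5 statements merged into one kernel-verified Lean document; each statement's English description precedes it below -/
import Mathlib

section
/- Suppose X, W are elements of a ring satisfying the two Heun–Askey–Wilson relations: [X,[X,W]] = ρ·XWX + e₁·X³ + b₁·X² + b₂·{X,W} + b₃·X + b₄·W + b₅ and [W,[W,X]] = ρ·WXW + e₂·X³ + e₃·XWX + e₄·X² + b₁'·{X,W} + b₂·W² + b₃'·W + b₆·X + b₇, with Z = [X,W]. Then [[X,Z],W] + [[Z,W],X] = (e₁·(ρ+2) + e₁ − e₃)·XZX + (b₁ − b₁' + e₁·b₂)·{X,Z} + (b₃ − b₃' + e₁·b₄)·Z. -/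
/-- Consequence of the HAW relations: the sum of the two iterated commutators
`[[X,Z],W] + [[Z,W],X]` with `Z = [X,W]`. -/
theorem stmt_4 {k R : Type*} [CommRing k] [Ring R] [Algebra k R]
    (ρ e₁ e₂ e₃ e₄ b₁ b₂ b₃ b₄ b₅ b₁' b₃' b₆ b₇ : k) (X W : R)
    (h1 : X * (X * W - W * X) - (X * W - W * X) * X =
      ρ • (X * W * X) + e₁ • X ^ 3 + b₁ • X ^ 2 + b₂ • (X * W + W * X)
        + b₃ • X + b₄ • W + b₅ • (1 : R))
    (h2 : W * (W * X - X * W) - (W * X - X * W) * W =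
      ρ • (W * X * W) + e₂ • X ^ 3 + e₃ • (X * W * X) + e₄ • X ^ 2
        + b₁' • (X * W + W * X) + b₂ • W ^ 2 + b₃' • W + b₆ • X + b₇ • (1 : R)) :
    (let Z := X * W - W * X
    ((X * Z - Z * X) * W - W * (X * Z - Z * X)) +
      ((Z * W - W * Z) * X - X * (Z * W - W * Z)) =
      (e₁ * (ρ + 2) + e₁ - e₃) • (X * Z * X)
        + (b₁ - b₁' + e₁ * b₂) • (X * Z + Z * X)
        + (b₃ - b₃' + e₁ * b₄) • Z) := by
  intro Z
  linear_combination (norm := skip)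
    (h1 * W - W * h1) + (h2 * X - X * h2) + e₁ • (X * h1 - h1 * X)
  simp only [Z, pow_succ, pow_zero, one_mul, mul_one, smul_add, smul_sub,
    mul_add, add_mul, mul_sub, sub_mul, mul_smul_comm, smul_mul_assoc,
    smul_smul, mul_assoc]
  match_scalars <;> ring
end

section
/- Suppose X, W satisfy the Heun–Askey–Wilson relations as above, with Z = [X,W]. If the Jacobi identity [[X,Z],W] + [[Z,W],X] + [[W,X],Z] = 0 is imposed and the elements XZX, {X,Z}, Z together with the identity are linearly independent over the scalars, then the structure constants satisfy e₃ = e₁·(ρ+3), b₁' = b₁ + e₁·b₂, and b₃' = b₃ + e₁·b₄. -/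
/-- The Jacobi identity together with linear independence of `XZX`, `{X,Z}`, `Z`, `1`
forces the constraints `e₃ = e₁(ρ+3)`, `b₁' = b₁ + e₁b₂`, `b₃' = b₃ + e₁b₄`
on the structure constants of the HAW algebra. -/
theorem stmt_5 {k R : Type*} [Field k] [Ring R] [Algebra k R]
    (ρ e₁ e₂ e₃ e₄ b₁ b₂ b₃ b₄ b₅ b₁' b₃' b₆ b₇ : k) (X W : R)
    (h1 : X * (X * W - W * X) - (X * W - W * X) * X =
      ρ • (X * W * X) + e₁ • X ^ 3 + b₁ • X ^ 2 + b₂ • (X * W + W * X)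
        + b₃ • X + b₄ • W + b₅ • (1 : R))
    (h2 : W * (W * X - X * W) - (W * X - X * W) * W =
      ρ • (W * X * W) + e₂ • X ^ 3 + e₃ • (X * W * X) + e₄ • X ^ 2
        + b₁' • (X * W + W * X) + b₂ • W ^ 2 + b₃' • W + b₆ • X + b₇ • (1 : R))
    (Z : R) (hZ : Z = X * W - W * X)
    (hJac : ((X * Z - Z * X) * W - W * (X * Z - Z * X)) +
      ((Z * W - W * Z) * X - X * (Z * W - W * Z)) +
      ((W * X - X * W) * Z - Z * (W * X - X * W)) = 0)
    (hLI : LinearIndependent k ![X * Z * X, X * Z + Z * X, Z, (1 : R)]) :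
    e₃ = e₁ * (ρ + 3) ∧ b₁' = b₁ + e₁ * b₂ ∧ b₃' = b₃ + e₁ * b₄ := by
  subst hZ
  set P := X * W - W * X with hP
  have e1z : (X * P - P * X) -
      (ρ • (X * W * X) + e₁ • X ^ 3 + b₁ • X ^ 2 + b₂ • (X * W + W * X)
        + b₃ • X + b₄ • W + b₅ • (1 : R)) = 0 := sub_eq_zero_of_eq h1
  have e2z : (W * (W * X - X * W) - (W * X - X * W) * W) -
      (ρ • (W * X * W) + e₂ • X ^ 3 + e₃ • (X * W * X) + e₄ • X ^ 2
        + b₁' • (X * W + W * X) + b₂ • W ^ 2 + b₃' • W + b₆ • X + b₇ • (1 : R)) = 0 :=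
    sub_eq_zero_of_eq h2
  set E1 := (X * P - P * X) -
      (ρ • (X * W * X) + e₁ • X ^ 3 + b₁ • X ^ 2 + b₂ • (X * W + W * X)
        + b₃ • X + b₄ • W + b₅ • (1 : R)) with hE1
  set E2 := (W * (W * X - X * W) - (W * X - X * W) * W) -
      (ρ • (W * X * W) + e₂ • X ^ 3 + e₃ • (X * W * X) + e₄ • X ^ 2
        + b₁' • (X * W + W * X) + b₂ • W ^ 2 + b₃' • W + b₆ • X + b₇ • (1 : R)) with hE2
  have key : (e₁ * (ρ + 3) - e₃) • (X * P * X) + (b₁ + e₁ * b₂ - b₁') • (X * P + P * X)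
      + (b₃ + e₁ * b₄ - b₃') • P + (0 : k) • (1 : R) = 0 := by
    calc (e₁ * (ρ + 3) - e₃) • (X * P * X) + (b₁ + e₁ * b₂ - b₁') • (X * P + P * X)
        + (b₃ + e₁ * b₄ - b₃') • P + (0 : k) • (1 : R)
        = (((X * P - P * X) * W - W * (X * P - P * X)) +
            ((P * W - W * P) * X - X * (P * W - W * P)) +
            ((W * X - X * W) * P - P * (W * X - X * W)))
          - e₁ • (X * E1 - E1 * X) - (E1 * W - W * E1) - (E2 * X - X * E2) := by
          rw [hE1, hE2, hP]
          simp only [mul_add, add_mul, mul_sub, sub_mul, smul_add, smul_sub,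
            smul_mul_assoc, mul_smul_comm, mul_assoc, mul_one, one_mul,
            pow_succ, pow_zero, smul_smul]
          module
      _ = 0 := by rw [hJac, e1z, e2z]; simp
  have := Fintype.linearIndependent_iff.mp hLI
    ![e₁ * (ρ + 3) - e₃, b₁ + e₁ * b₂ - b₁', b₃ + e₁ * b₄ - b₃', 0]
    (by simpa [Fin.sum_univ_four] using key)
  have h0 := this 0
  have h1' := this 1
  have h2' := this 2
  simp [Matrix.cons_val_zero, Matrix.cons_val_one, sub_eq_zero] at h0 h1' h2'
  exact ⟨h0.symm, h1'.symm, h2'.symm⟩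
end

section
/- Let X, Y satisfy the Askey–Wilson relation [X,[X,Y]] = ρ·XYX + a₁·X² + a₂·{X,Y} + a₃·X + a₄·Y + a₅·1 with ρ = q² + q⁻² − 2, and let G = qYX − q⁻¹XY. Then G·X = q²·X·G + a₁q·X² + a₂q·(XY + YX) + a₃q·X + a₄q·Y + a₅q·1. -/
/-- Reordering relation `GX = q²XG + a₁qX² + a₂q(XY+YX) + a₃qX + a₄qY + a₅q·1`
for `G = [Y,X]_q` in the Askey–Wilson algebra. -/
theorem stmt_8 {k R : Type*} [Field k] [Ring R] [Algebra k R]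
    (q a₁ a₂ a₃ a₄ a₅ : k) (hq : q ≠ 0) (X Y : R)
    (hAW : X * (X * Y - Y * X) - (X * Y - Y * X) * X =
      (q ^ 2 + q⁻¹ ^ 2 - 2) • (X * Y * X) + a₁ • X ^ 2 + a₂ • (X * Y + Y * X)
        + a₃ • X + a₄ • Y + a₅ • (1 : R)) :
    (let G := q • (Y * X) - q⁻¹ • (X * Y)
    G * X = (q ^ 2) • (X * G) + (a₁ * q) • X ^ 2 + (a₂ * q) • (X * Y + Y * X)
      + (a₃ * q) • X + (a₄ * q) • Y + (a₅ * q) • (1 : R)) := by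
  intro G
  have hG : G = q • (Y * X) - q⁻¹ • (X * Y) := rfl
  rw [hG, ← sub_eq_zero] at *
  have key : (q • (Y * X) - q⁻¹ • (X * Y)) * X -
      ((q ^ 2) • (X * (q • (Y * X) - q⁻¹ • (X * Y))) + (a₁ * q) • X ^ 2
        + (a₂ * q) • (X * Y + Y * X) + (a₃ * q) • X + (a₄ * q) • Y + (a₅ * q) • (1 : R))
      = q • (X * (X * Y - Y * X) - (X * Y - Y * X) * X -
        ((q ^ 2 + q⁻¹ ^ 2 - 2) • (X * Y * X) + a₁ • X ^ 2 + a₂ • (X * Y + Y * X)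
        + a₃ • X + a₄ • Y + a₅ • (1 : R))) := by
    simp only [mul_sub, sub_mul, mul_add, add_mul, smul_mul_assoc, mul_smul_comm,
      smul_sub, smul_add, smul_smul, mul_assoc, pow_two]
    match_scalars <;> field_simp <;> ring
  rw [key, hAW, smul_zero]
end

section
/- Let X, Y satisfy the Askey–Wilson relation [X,[X,Y]] = ρ·XYX + a₁·X² + a₂·{X,Y} + a₃·X + a₄·Y + a₅·1 with ρ = q² + q⁻² − 2 and G̃ = qXY − q⁻¹YX. Then G̃·X = q⁻²·X·G̃ − a₁q⁻¹·X² − a₂q⁻¹·(XY + YX) − a₃q⁻¹·X − a₄q⁻¹·Y − a₅q⁻¹·1. -/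
/-- Reordering relation for `G̃ = [X,Y]_q` in the Askey–Wilson algebra:
`G̃X = q⁻²XG̃ − a₁q⁻¹X² − a₂q⁻¹(XY+YX) − a₃q⁻¹X − a₄q⁻¹Y − a₅q⁻¹·1`. -/
theorem stmt_9 {k R : Type*} [Field k] [Ring R] [Algebra k R]
    (q a₁ a₂ a₃ a₄ a₅ : k) (hq : q ≠ 0) (X Y : R)
    (hAW : X * (X * Y - Y * X) - (X * Y - Y * X) * X =
      (q ^ 2 + q⁻¹ ^ 2 - 2) • (X * Y * X) + a₁ • X ^ 2 + a₂ • (X * Y + Y * X)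
        + a₃ • X + a₄ • Y + a₅ • (1 : R)) :
    (let G' := q • (X * Y) - q⁻¹ • (Y * X)
    G' * X = (q⁻¹ ^ 2) • (X * G') - (a₁ * q⁻¹) • X ^ 2 - (a₂ * q⁻¹) • (X * Y + Y * X)
      - (a₃ * q⁻¹) • X - (a₄ * q⁻¹) • Y - (a₅ * q⁻¹) • (1 : R)) := by
  intro G'
  set_option linter.unnecessarySeqFocus false in
  have key : G' * X - ((q⁻¹ ^ 2) • (X * G') - (a₁ * q⁻¹) • X ^ 2
      - (a₂ * q⁻¹) • (X * Y + Y * X) - (a₃ * q⁻¹) • X - (a₄ * q⁻¹) • Y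
      - (a₅ * q⁻¹) • (1 : R))
      = (-q⁻¹) • ((X * (X * Y - Y * X) - (X * Y - Y * X) * X)
        - ((q ^ 2 + q⁻¹ ^ 2 - 2) • (X * Y * X) + a₁ • X ^ 2 + a₂ • (X * Y + Y * X)
          + a₃ • X + a₄ • Y + a₅ • (1 : R))) := by
    show (q • (X * Y) - q⁻¹ • (Y * X)) * X - ((q⁻¹ ^ 2) • (X * (q • (X * Y) - q⁻¹ • (Y * X))) - (a₁ * q⁻¹) • X ^ 2
      - (a₂ * q⁻¹) • (X * Y + Y * X) - (a₃ * q⁻¹) • X - (a₄ * q⁻¹) • Y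
      - (a₅ * q⁻¹) • (1 : R)) = _
    simp only [mul_sub, sub_mul, smul_mul_assoc, mul_smul_comm, mul_assoc, pow_two]
    match_scalars <;> (try field_simp) <;> ring
  rw [sub_eq_zero.mpr hAW, smul_zero, sub_eq_zero] at key
  exact key
end

section
/- Let q be a scalar with q² ≠ 1 and consider, on the ring of Laurent polynomials k[z,z⁻¹], the operator W = A₁(z)T⁺ + A₂(z)T⁻ + A₀(z) where T±f(z) = f(q^{±2}z), A₁(z) = Q(z)/(z(1−z²)(1−q²z²)), A₂(z) = A₁(1/z), A₀(z) = p₁(z + z⁻¹) − A₁(z) − A₂(z), with Q a polynomial of degree at most 6 and p₁ a polynomial of degree at most 1. Assume the rational functions A₀, A₁, A₂ are Laurent polynomials. Then for every n ≥ 0, W maps (z + z⁻¹)ⁿ to a polynomial of degree at most n+1 in x = z + z⁻¹. -/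
noncomputable section

/-- The substitution `z ↦ c·z` on rational functions. -/
def qShift {k : Type*} [Field k] (c : k) (f : RatFunc k) : RatFunc k :=
  RatFunc.eval (algebraMap k (RatFunc k)) (RatFunc.C c * RatFunc.X) f

/-- A rational function is a Laurent polynomial if it is `z⁻ᵐ` times a polynomial. -/
def IsLaurent {k : Type*} [Field k] (f : RatFunc k) : Prop :=
  ∃ (p : Polynomial k) (m : ℕ),
    f = (RatFunc.X : RatFunc k)⁻¹ ^ m * algebraMap (Polynomial k) (RatFunc k) p

namespace HAW

open Polynomial

variable {k : Type*} [Field k]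

lemma algebraMap_eq_aeval (t : Polynomial k) :
    algebraMap (Polynomial k) (RatFunc k) t = Polynomial.aeval RatFunc.X t := by
  induction t using Polynomial.induction_on' with
  | add p q hp hq => rw [map_add, map_add, hp, hq]
  | monomial n a =>
      simp [← Polynomial.C_mul_X_pow_eq_monomial, map_mul, map_pow,
        RatFunc.algebraMap_C, RatFunc.algebraMap_X, RatFunc.algebraMap_eq_C]

lemma comp_ne {c : k} (hc : c ≠ 0) {t : Polynomial k} (ht : t ≠ 0) :
    t.comp (Polynomial.C c * Polynomial.X) ≠ 0 := by
  intro h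
  have hd : (Polynomial.C c * Polynomial.X : Polynomial k).natDegree = 1 := by
    simpa using Polynomial.natDegree_C_mul_X c hc
  have := Polynomial.leadingCoeff_comp (p := t) (q := Polynomial.C c * Polynomial.X)
      (by rw [hd]; exact one_ne_zero)
  rw [h] at this
  have hlc : (Polynomial.C c * Polynomial.X : Polynomial k).leadingCoeff = c := by
    exact Polynomial.leadingCoeff_C_mul_X c
  rw [hlc] at this
  exact (mul_ne_zero (Polynomial.leadingCoeff_ne_zero.mpr ht) (pow_ne_zero _ hc)) this.symm

lemma qShift_div (c : k) (hc : c ≠ 0) (p s : Polynomial k) (hs : s ≠ 0) :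
    qShift c (algebraMap (Polynomial k) (RatFunc k) p / algebraMap (Polynomial k) (RatFunc k) s) =
      algebraMap (Polynomial k) (RatFunc k) (p.comp (Polynomial.C c * Polynomial.X)) /
        algebraMap (Polynomial k) (RatFunc k) (s.comp (Polynomial.C c * Polynomial.X)) := by
  set g : Polynomial k := Polynomial.C c * Polynomial.X with hg
  set f : RatFunc k := algebraMap (Polynomial k) (RatFunc k) p /
      algebraMap (Polynomial k) (RatFunc k) s with hf
  have hev : ∀ t : Polynomial k,
      Polynomial.eval₂ (algebraMap k (RatFunc k)) (RatFunc.C c * RatFunc.X) t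
        = algebraMap (Polynomial k) (RatFunc k) (t.comp g) := by
    intro t
    rw [← Polynomial.aeval_def, algebraMap_eq_aeval, Polynomial.aeval_comp]
    congr 1
    simp [hg, RatFunc.algebraMap_eq_C]
  have hsd : algebraMap (Polynomial k) (RatFunc k) s ≠ 0 := RatFunc.algebraMap_ne_zero hs
  have hdd : algebraMap (Polynomial k) (RatFunc k) f.denom ≠ 0 :=
    RatFunc.algebraMap_ne_zero (RatFunc.denom_ne_zero f)
  have key : f.num * s = p * f.denom := by
    apply RatFunc.algebraMap_injective k
    push_cast [map_mul]
    rw [← div_eq_div_iff hdd hsd, RatFunc.num_div_denom]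
  have key2 : (f.num.comp g) * (s.comp g) = (p.comp g) * (f.denom.comp g) := by
    have := congrArg (Polynomial.aeval (RatFunc.C c * RatFunc.X) :
      Polynomial k → RatFunc k) key
    apply RatFunc.algebraMap_injective k
    rw [map_mul, map_mul, ← hev, ← hev, ← hev, ← hev]
    simpa [map_mul, Polynomial.aeval_def] using this
  show RatFunc.eval _ _ f = _
  rw [RatFunc.eval, hev, hev]
  rw [div_eq_div_iff (RatFunc.algebraMap_ne_zero (comp_ne hc (RatFunc.denom_ne_zero f)))
      (RatFunc.algebraMap_ne_zero (comp_ne hc hs))]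
  rw [← map_mul, ← map_mul, key2]

lemma x_pow_eq (n : ℕ) :
    ((RatFunc.X : RatFunc k) + (RatFunc.X : RatFunc k)⁻¹) ^ n =
      algebraMap (Polynomial k) (RatFunc k) ((Polynomial.X ^ 2 + 1) ^ n) /
        algebraMap (Polynomial k) (RatFunc k) (Polynomial.X ^ n) := by
  rw [map_pow, map_pow, ← div_pow]
  congr 1
  rw [map_add, map_pow, map_one, RatFunc.algebraMap_X]
  have hX : (RatFunc.X : RatFunc k) ≠ 0 := RatFunc.X_ne_zero
  field_simp

lemma qShift_x_pow {c : k} (hc : c ≠ 0) (n : ℕ) :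
    qShift c (((RatFunc.X : RatFunc k) + (RatFunc.X : RatFunc k)⁻¹) ^ n) =
      (RatFunc.C c * RatFunc.X + (RatFunc.C c)⁻¹ * (RatFunc.X : RatFunc k)⁻¹) ^ n := by
  rw [x_pow_eq, qShift_div c hc _ _ (pow_ne_zero _ Polynomial.X_ne_zero)]
  rw [Polynomial.pow_comp, Polynomial.pow_comp, map_pow, map_pow, ← div_pow]
  congr 1
  rw [Polynomial.add_comp, Polynomial.pow_comp, Polynomial.X_comp, Polynomial.one_comp]
  have hX : (RatFunc.X : RatFunc k) ≠ 0 := RatFunc.X_ne_zero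
  have hC : RatFunc.C c ≠ 0 := by
    simpa [RatFunc.algebraMap_C] using
      RatFunc.algebraMap_ne_zero (K := k) (Polynomial.C_ne_zero.mpr hc)
  push_cast [map_add, map_mul, map_pow, map_one, RatFunc.algebraMap_X, RatFunc.algebraMap_C]
  field_simp

/-- two-step linear recursion of polynomials -/
def Prec (μ ν P0 P1 : Polynomial k) : ℕ → Polynomial k
  | 0 => P0
  | 1 => P1
  | n + 2 => μ * Prec μ ν P0 P1 (n + 1) - ν * Prec μ ν P0 P1 n

lemma Prec_natDegree {μ ν P0 P1 : Polynomial k} (hμ : μ.natDegree ≤ 1)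
    (hν : ν.natDegree ≤ 2) (d : ℕ) (h0 : P0.natDegree ≤ d) (h1 : P1.natDegree ≤ d + 1) :
    ∀ n, (Prec μ ν P0 P1 n).natDegree ≤ d + n := by
  have key : ∀ n, (Prec μ ν P0 P1 n).natDegree ≤ d + n ∧
      (Prec μ ν P0 P1 (n + 1)).natDegree ≤ d + (n + 1) := by
    intro n
    induction n with
    | zero => exact ⟨by simpa [Prec] using h0, by simpa [Prec] using h1⟩
    | succ m ih =>
        refine ⟨ih.2, ?_⟩
        show (μ * Prec μ ν P0 P1 (m + 1) - ν * Prec μ ν P0 P1 m).natDegree ≤ d + (m + 2)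
        refine le_trans (Polynomial.natDegree_sub_le _ _) (max_le ?_ ?_)
        · refine le_trans (Polynomial.natDegree_mul_le) ?_
          have := ih.2; omega
        · refine le_trans (Polynomial.natDegree_mul_le) ?_
          have := ih.1; omega
  exact fun n => (key n).1

lemma Prec_aeval {μ ν P0 P1 : Polynomial k} (x u v w₁ w₂ : RatFunc k)
    (hμ : Polynomial.aeval x μ = u + v) (hν : Polynomial.aeval x ν = u * v)
    (h0 : Polynomial.aeval x P0 = w₁ + w₂) (h1 : Polynomial.aeval x P1 = w₁ * u + w₂ * v) :
    ∀ n, Polynomial.aeval x (Prec μ ν P0 P1 n) = w₁ * u ^ n + w₂ * v ^ n := by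
  have key : ∀ n, Polynomial.aeval x (Prec μ ν P0 P1 n) = w₁ * u ^ n + w₂ * v ^ n ∧
      Polynomial.aeval x (Prec μ ν P0 P1 (n + 1)) = w₁ * u ^ (n + 1) + w₂ * v ^ (n + 1) := by
    intro n
    induction n with
    | zero => exact ⟨by simpa [Prec] using h0, by simpa [Prec] using h1⟩
    | succ m ih =>
        refine ⟨ih.2, ?_⟩
        show Polynomial.aeval x (μ * Prec μ ν P0 P1 (m + 1) - ν * Prec μ ν P0 P1 m) = _
        rw [map_sub, map_mul, map_mul, hμ, hν, ih.1, ih.2]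
        ring
  exact fun n => (key n).1

end HAW

set_option maxHeartbeats 2000000 in
/-- The Heun–Askey–Wilson operator `W = A₁T⁺ + A₂T⁻ + A₀`, with `A₁ = Q(z)/(z(1−z²)(1−q²z²))`,
`A₂(z) = A₁(1/z)`, `A₀ = p₁(z+z⁻¹) − A₁ − A₂`, maps `(z+z⁻¹)ⁿ` to a polynomial of degree
at most `n+1` in `x = z + z⁻¹`, provided `A₀, A₁, A₂` are Laurent polynomials. -/
theorem stmt_19 {k : Type*} [Field k] (q : k) (hq : q ≠ 0) (hq2 : q ^ 2 ≠ 1)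
    (r : ℕ → k) (κ₁ κ₀ : k) :
    let z : RatFunc k := RatFunc.X
    let A₁ : RatFunc k := (∑ i ∈ Finset.range 7, RatFunc.C (r i) * z ^ i) /
        (z * (1 - z ^ 2) * (1 - RatFunc.C (q ^ 2) * z ^ 2))
    let A₂ : RatFunc k := (∑ i ∈ Finset.range 7, RatFunc.C (r i) * z⁻¹ ^ i) /
        (z⁻¹ * (1 - z⁻¹ ^ 2) * (1 - RatFunc.C (q ^ 2) * z⁻¹ ^ 2))
    let A₀ : RatFunc k := RatFunc.C κ₁ * (z + z⁻¹) + RatFunc.C κ₀ - A₁ - A₂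
    let Wop : RatFunc k → RatFunc k := fun f =>
      A₁ * qShift (q ^ 2) f + A₂ * qShift ((q ^ 2)⁻¹) f + A₀ * f
    IsLaurent A₀ → IsLaurent A₁ → IsLaurent A₂ →
      ∀ n : ℕ, ∃ p : Polynomial k, p.natDegree ≤ n + 1 ∧
        Wop ((z + z⁻¹) ^ n) = Polynomial.aeval (z + z⁻¹) p := by
  intro z A₁ A₂ A₀ Wop hL0 hL1 hL2 n
  clear hL0 hL2
  have hz : z = RatFunc.X := rfl
  have hX : z ≠ 0 := RatFunc.X_ne_zero
  have hqq : q ^ 2 ≠ 0 := pow_ne_zero _ hq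
  have hT : RatFunc.C (q ^ 2) ≠ 0 := by
    simpa [RatFunc.algebraMap_C] using
      RatFunc.algebraMap_ne_zero (K := k) (Polynomial.C_ne_zero.mpr hqq)
  -- the numerator polynomial and denominator polynomial
  set Q : Polynomial k := ∑ i ∈ Finset.range 7, Polynomial.C (r i) * Polynomial.X ^ i with hQ
  set B : Polynomial k := (1 - Polynomial.X ^ 2) *
      (1 - Polynomial.C (q ^ 2) * Polynomial.X ^ 2) with hB
  have hQsum : ∀ w : RatFunc k,
      (∑ i ∈ Finset.range 7, RatFunc.C (r i) * w ^ i) = Polynomial.aeval w Q := by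
    intro w
    rw [hQ, map_sum]
    refine Finset.sum_congr rfl fun i _ => ?_
    simp [RatFunc.algebraMap_eq_C]
  have hBaev : ∀ w : RatFunc k,
      Polynomial.aeval w B = (1 - w ^ 2) * (1 - RatFunc.C (q ^ 2) * w ^ 2) := by
    intro w
    simp [hB, RatFunc.algebraMap_eq_C]
  -- A₁ as a quotient of polynomial images
  have hA1 : A₁ = algebraMap (Polynomial k) (RatFunc k) Q /
      (z * Polynomial.aeval z B) := by
    show (∑ i ∈ Finset.range 7, RatFunc.C (r i) * z ^ i) /
        (z * (1 - z ^ 2) * (1 - RatFunc.C (q ^ 2) * z ^ 2)) = _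
    rw [hQsum z, hBaev z, HAW.algebraMap_eq_aeval, ← hz, mul_assoc]
  have hBz : Polynomial.aeval z B = algebraMap (Polynomial k) (RatFunc k) B := by
    rw [HAW.algebraMap_eq_aeval, hz]
  have hBne : B ≠ 0 := by
    intro h
    have := congrArg (Polynomial.eval 0) h
    simp [hB] at this
  have hBzne : Polynomial.aeval z B ≠ 0 := by
    rw [hBz]; exact RatFunc.algebraMap_ne_zero hBne
  -- divisibility from the Laurent hypothesis
  obtain ⟨pl, m, hlm⟩ := hL1
  have hpoly : Q * Polynomial.X ^ m = pl * (Polynomial.X * B) := by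
    have hlm' : algebraMap (Polynomial k) (RatFunc k) Q =
        (z⁻¹ : RatFunc k) ^ m * algebraMap (Polynomial k) (RatFunc k) pl *
          (z * algebraMap (Polynomial k) (RatFunc k) B) := by
      have h1 : algebraMap (Polynomial k) (RatFunc k) Q /
          (z * algebraMap (Polynomial k) (RatFunc k) B) =
          (z⁻¹ : RatFunc k) ^ m * algebraMap (Polynomial k) (RatFunc k) pl := by
        rw [← hBz, ← hA1]; exact hlm
      have hXB : (z : RatFunc k) * algebraMap (Polynomial k) (RatFunc k) B ≠ 0 :=
        mul_ne_zero hX (RatFunc.algebraMap_ne_zero hBne)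
      rw [div_eq_iff hXB] at h1
      exact h1
    apply RatFunc.algebraMap_injective k
    rw [map_mul, map_mul, map_mul, map_pow, RatFunc.algebraMap_X]
    calc algebraMap (Polynomial k) (RatFunc k) Q * (RatFunc.X : RatFunc k) ^ m
        = ((z : RatFunc k)⁻¹ ^ m * algebraMap (Polynomial k) (RatFunc k) pl *
            (z * algebraMap (Polynomial k) (RatFunc k) B)) * z ^ m := by rw [← hlm']
      _ = (z⁻¹ * z) ^ m * (algebraMap (Polynomial k) (RatFunc k) pl *
            (z * algebraMap (Polynomial k) (RatFunc k) B)) := by ring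
      _ = algebraMap (Polynomial k) (RatFunc k) pl *
            (z * algebraMap (Polynomial k) (RatFunc k) B) := by
            rw [inv_mul_cancel₀ hX]; simp
  have hcop : IsCoprime B (Polynomial.X ^ m : Polynomial k) := by
    refine IsCoprime.pow_right ?_
    exact ⟨1, (1 + Polynomial.C (q ^ 2)) * Polynomial.X - Polynomial.C (q ^ 2) *
      Polynomial.X ^ 3, by rw [hB]; ring⟩
  have hdvd : B ∣ Q := by
    refine hcop.dvd_of_dvd_mul_right ⟨pl * Polynomial.X, ?_⟩
    rw [hpoly]; ring
  obtain ⟨S, hS⟩ := hdvd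
  -- degree of S
  have hQdeg : Q.natDegree ≤ 6 := by
    rw [hQ]
    refine Polynomial.natDegree_sum_le_of_forall_le _ _ fun i hi => ?_
    refine le_trans (Polynomial.natDegree_C_mul_le _ _) ?_
    refine le_trans (Polynomial.natDegree_X_pow_le _) ?_
    exact Nat.lt_succ_iff.mp (Finset.mem_range.mp hi)
  have hB4 : B.natDegree = 4 := by
    rw [hB]
    compute_degree!
  have hSdeg : S.natDegree ≤ 2 := by
    by_cases hS0 : S = 0
    · simp [hS0]
    · have hmul := Polynomial.natDegree_mul hBne hS0
      rw [← hS, hB4] at hmul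
      omega
  set s0 : k := S.coeff 0 with hs0
  set s1 : k := S.coeff 1 with hs1
  set s2 : k := S.coeff 2 with hs2
  have hSaev : ∀ w : RatFunc k,
      Polynomial.aeval w S = RatFunc.C s0 + RatFunc.C s1 * w + RatFunc.C s2 * w ^ 2 := by
    intro w
    rw [Polynomial.aeval_eq_sum_range' (n := 3) (by omega) w]
    rw [Finset.sum_range_succ, Finset.sum_range_succ, Finset.sum_range_one]
    simp [Algebra.smul_def, RatFunc.algebraMap_eq_C]
    rfl
  -- the reduced forms of A₁ and A₂
  have hA1' : A₁ = RatFunc.C s2 * z + RatFunc.C s1 + RatFunc.C s0 * z⁻¹ := by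
    rw [hA1, hS, map_mul, ← hBz, HAW.algebraMap_eq_aeval, ← hz, hSaev z]
    field_simp
    ring
  have hz2 : (z : RatFunc k) ^ 2 ≠ 1 := by
    intro h
    have : algebraMap (Polynomial k) (RatFunc k) (Polynomial.X ^ 2) =
        algebraMap (Polynomial k) (RatFunc k) 1 := by
      rw [map_pow, RatFunc.algebraMap_X, ← hz, map_one, h]
    have h2 := RatFunc.algebraMap_injective k this
    have := congrArg (fun t => Polynomial.coeff t 2) h2
    simp [Polynomial.coeff_one] at this
  have hq2z : RatFunc.C (q ^ 2) ≠ z ^ 2 := by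
    intro h
    have hx2 : algebraMap (Polynomial k) (RatFunc k) (Polynomial.X ^ 2) = z ^ 2 := by
      rw [map_pow, RatFunc.algebraMap_X, ← hz]
    have : algebraMap (Polynomial k) (RatFunc k) (Polynomial.C (q ^ 2)) =
        algebraMap (Polynomial k) (RatFunc k) (Polynomial.X ^ 2) := by
      rw [hx2, RatFunc.algebraMap_C, h]
    have h2 := RatFunc.algebraMap_injective k this
    have := congrArg (fun t => Polynomial.coeff t 2) h2
    rw [Polynomial.coeff_C, Polynomial.coeff_X_pow] at this
    norm_num at this
  have hzz : (z⁻¹ : RatFunc k) * z = 1 := inv_mul_cancel₀ hX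
  have h1z : (1 : RatFunc k) - z⁻¹ ^ 2 ≠ 0 := by
    intro h
    apply hz2
    have h' : ((1 : RatFunc k) - z⁻¹ ^ 2) * z ^ 2 = 0 * z ^ 2 := by rw [h]
    have h'' : ((1 : RatFunc k) - z⁻¹ ^ 2) * z ^ 2 = z ^ 2 - (z⁻¹ * z) ^ 2 := by ring
    rw [h'', hzz] at h'
    linear_combination h'
  have h2z : (1 : RatFunc k) - RatFunc.C (q ^ 2) * z⁻¹ ^ 2 ≠ 0 := by
    intro h
    apply hq2z
    have h' : ((1 : RatFunc k) - RatFunc.C (q ^ 2) * z⁻¹ ^ 2) * z ^ 2 = 0 * z ^ 2 := by rw [h]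
    have h'' : ((1 : RatFunc k) - RatFunc.C (q ^ 2) * z⁻¹ ^ 2) * z ^ 2 =
        z ^ 2 - RatFunc.C (q ^ 2) * (z⁻¹ * z) ^ 2 := by ring
    rw [h'', hzz] at h'
    linear_combination -h'
  have hA2' : A₂ = RatFunc.C s0 * z + RatFunc.C s1 + RatFunc.C s2 * z⁻¹ := by
    show (∑ i ∈ Finset.range 7, RatFunc.C (r i) * z⁻¹ ^ i) /
        (z⁻¹ * (1 - z⁻¹ ^ 2) * (1 - RatFunc.C (q ^ 2) * z⁻¹ ^ 2)) = _
    rw [hQsum z⁻¹, hS, map_mul, hBaev z⁻¹, hSaev z⁻¹]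
    rw [div_eq_iff (mul_ne_zero (mul_ne_zero (inv_ne_zero hX) h1z) h2z)]
    field_simp [hX]
  -- shifted variables
  have hCinv : RatFunc.C ((q ^ 2)⁻¹) = (RatFunc.C (q ^ 2))⁻¹ := map_inv₀ _ _
  have hqs1 : qShift (q ^ 2) ((z + z⁻¹) ^ n) =
      (RatFunc.C (q ^ 2) * z + (RatFunc.C (q ^ 2))⁻¹ * z⁻¹) ^ n := HAW.qShift_x_pow hqq n
  have hqs2 : qShift ((q ^ 2)⁻¹) ((z + z⁻¹) ^ n) =
      ((RatFunc.C (q ^ 2))⁻¹ * z + RatFunc.C (q ^ 2) * z⁻¹) ^ n := by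
    have h := HAW.qShift_x_pow (k := k) (inv_ne_zero hqq) n
    rw [hCinv, inv_inv] at h
    exact h
  set x : RatFunc k := z + z⁻¹ with hxdef
  set T : RatFunc k := RatFunc.C (q ^ 2) with hTdef
  set u : RatFunc k := T * z + T⁻¹ * z⁻¹ with hudef
  set v : RatFunc k := T⁻¹ * z + T * z⁻¹ with hvdef
  have hTpow : RatFunc.C q ^ 2 = T := by rw [hTdef, map_pow]
  -- the recursion data
  set Pmu : Polynomial k := Polynomial.C (q ^ 2 + (q ^ 2)⁻¹) * Polynomial.X with hPmu
  set Pnu : Polynomial k := Polynomial.X ^ 2 +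
      Polynomial.C ((q ^ 2) ^ 2 + ((q ^ 2)⁻¹) ^ 2 - 2) with hPnu
  set PF1 : Polynomial k := Polynomial.C (q ^ 2) * Polynomial.X ^ 2 +
      Polynomial.C (2 * (q ^ 2)⁻¹ - 2 * q ^ 2) with hPF1
  set PH1 : Polynomial k := Polynomial.C ((q ^ 2)⁻¹) * Polynomial.X ^ 2 +
      Polynomial.C (2 * q ^ 2 - 2 * (q ^ 2)⁻¹) with hPH1
  have hmu : Polynomial.aeval x Pmu = u + v := by
    rw [hPmu]
    simp only [map_mul, map_add, Polynomial.aeval_X, Polynomial.aeval_C,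
      RatFunc.algebraMap_eq_C, map_inv₀]
    rw [← hTdef, hudef, hvdef]
    ring
  have hnu : Polynomial.aeval x Pnu = u * v := by
    rw [hPnu]
    simp only [map_add, map_sub, map_pow, map_mul, Polynomial.aeval_X, Polynomial.aeval_C,
      RatFunc.algebraMap_eq_C, map_inv₀, map_ofNat]
    rw [hTpow, hudef, hvdef, hxdef]
    field_simp [hX, hT]
    ring
  have hF0 : Polynomial.aeval x (Polynomial.X : Polynomial k) = z + z⁻¹ := by
    rw [Polynomial.aeval_X, hxdef]
  have hH0 : Polynomial.aeval x (Polynomial.X : Polynomial k) = z⁻¹ + z := by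
    rw [hF0]; ring
  have hF1 : Polynomial.aeval x PF1 = z * u + z⁻¹ * v := by
    rw [hPF1]
    simp only [map_add, map_sub, map_pow, map_mul, Polynomial.aeval_X, Polynomial.aeval_C,
      RatFunc.algebraMap_eq_C, map_inv₀, map_ofNat]
    rw [hTpow, hudef, hvdef, hxdef]
    field_simp [hX, hT]
    ring
  have hH1 : Polynomial.aeval x PH1 = z⁻¹ * u + z * v := by
    rw [hPH1]
    simp only [map_add, map_sub, map_pow, map_mul, Polynomial.aeval_X, Polynomial.aeval_C,
      RatFunc.algebraMap_eq_C, map_inv₀, map_ofNat]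
    rw [hTpow, hudef, hvdef, hxdef]
    field_simp [hX, hT]
    ring
  have hG0 : Polynomial.aeval x (Polynomial.C 2 : Polynomial k) = 1 + 1 := by
    simp only [Polynomial.aeval_C, map_ofNat]
    norm_num
  have hG1 : Polynomial.aeval x Pmu = 1 * u + 1 * v := by
    rw [hmu]; ring
  have hF := HAW.Prec_aeval x u v z z⁻¹ hmu hnu hF0 hF1
  have hG := HAW.Prec_aeval x u v 1 1 hmu hnu hG0 hG1
  have hH := HAW.Prec_aeval x u v z⁻¹ z hmu hnu hH0 hH1
  -- degree bounds
  have hdmu : Pmu.natDegree ≤ 1 := by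
    rw [hPmu]; compute_degree
  have hdnu : Pnu.natDegree ≤ 2 := by
    rw [hPnu]; compute_degree
  have hdPF1 : PF1.natDegree ≤ 1 + 1 := by
    rw [hPF1]; compute_degree
  have hdPH1 : PH1.natDegree ≤ 1 + 1 := by
    rw [hPH1]; compute_degree
  have hdC2 : (Polynomial.C 2 : Polynomial k).natDegree ≤ 0 := by
    simp
  have hdmu' : Pmu.natDegree ≤ 0 + 1 := by simpa using hdmu
  have hdF := HAW.Prec_natDegree hdmu hdnu 1 Polynomial.natDegree_X_le hdPF1
  have hdG := HAW.Prec_natDegree (P0 := Polynomial.C 2) (P1 := Pmu) hdmu hdnu 0 hdC2 hdmu'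
  have hdH := HAW.Prec_natDegree hdmu hdnu 1 Polynomial.natDegree_X_le hdPH1
  -- the polynomial
  refine ⟨Polynomial.C s2 * HAW.Prec Pmu Pnu Polynomial.X PF1 n +
      Polynomial.C s1 * HAW.Prec Pmu Pnu (Polynomial.C 2) Pmu n +
      Polynomial.C s0 * HAW.Prec Pmu Pnu Polynomial.X PH1 n +
      Polynomial.C (κ₁ - (s2 + s0)) * Polynomial.X ^ (n + 1) +
      Polynomial.C (κ₀ - 2 * s1) * Polynomial.X ^ n, ?_, ?_⟩
  · have b1 := hdF n
    have b2 := hdG n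
    have b3 := hdH n
    refine le_trans (Polynomial.natDegree_add_le _ _) (max_le (le_trans
      (Polynomial.natDegree_add_le _ _) (max_le (le_trans (Polynomial.natDegree_add_le _ _)
      (max_le (le_trans (Polynomial.natDegree_add_le _ _) (max_le ?_ ?_)) ?_)) ?_)) ?_)
    · exact le_trans (Polynomial.natDegree_C_mul_le _ _) (by omega)
    · exact le_trans (Polynomial.natDegree_C_mul_le _ _) (by omega)
    · exact le_trans (Polynomial.natDegree_C_mul_le _ _) (by omega)
    · exact le_trans (Polynomial.natDegree_C_mul_le _ _)
        (le_of_eq (Polynomial.natDegree_X_pow _))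
    · exact le_trans (Polynomial.natDegree_C_mul_le _ _)
        (le_trans (le_of_eq (Polynomial.natDegree_X_pow _)) (by omega))
  · -- the evaluation identity
    have hA0 : A₀ = RatFunc.C κ₁ * x + RatFunc.C κ₀ - A₁ - A₂ := rfl
    show A₁ * qShift (q ^ 2) (x ^ n) + A₂ * qShift ((q ^ 2)⁻¹) (x ^ n) + A₀ * x ^ n = _
    rw [hqs1, hqs2, hA0, hA1', hA2']
    simp only [map_add, map_mul, map_pow, Polynomial.aeval_C, Polynomial.aeval_X,
      RatFunc.algebraMap_eq_C]
    rw [hF n, hG n, hH n]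
    simp only [map_sub, map_add, map_mul, map_ofNat]
    rw [hxdef]
    ring

end
end
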